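/- Let G be a group, N a finite normal subgroup of G, and suppose the quotient G/N is infinite cyclic. Then G contains a cyclic subgroup of finite index (i.e., G is virtually cyclic). -/

import Mathlib

/-- If `N` is a finite normal subgroup of `G` and `G ⧸ N` is infinite cyclic,
then `G` has a cyclic subgroup of finite index (`G` is virtually cyclic). -/
theorem stmt0 (G : Type*) [Group G] (N : Subgroup G) [N.Normal]
    (hNfin : (N : Set G).Finite)
    (hcyc : IsCyclic (G ⧸ N)) (hinf : Infinite (G ⧸ N)) :
    ∃ H : Subgroup G, IsCyclic H ∧ H.FiniteIndex := by
  obtain ⟨q, hq⟩ := hcyc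
  obtain ⟨g, rfl⟩ := QuotientGroup.mk_surjective q
  have hcy : IsCyclic (Subgroup.zpowers g) := by
    refine ⟨⟨⟨g, Subgroup.mem_zpowers g⟩, fun x => ?_⟩⟩
    obtain ⟨k, hk⟩ := x.2
    exact ⟨k, Subtype.ext (by simpa using hk)⟩
  refine ⟨Subgroup.zpowers g, hcy, ?_⟩
  have hNf : Finite N := hNfin.to_subtype
  have hsurj : Function.Surjective
      (fun n : N => (QuotientGroup.mk n.1 : G ⧸ Subgroup.zpowers g)) := by
    intro x
    obtain ⟨y, rfl⟩ := QuotientGroup.mk_surjective x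
    obtain ⟨k, hk⟩ := hq (QuotientGroup.mk (s := N) y)
    have hmem : y * (g ^ k)⁻¹ ∈ N := by
      have h2 : (y : G ⧸ N) = ((g ^ k : G) : G ⧸ N) := by simpa using hk.symm
      have := (QuotientGroup.eq_iff_div_mem (N := N)).mp h2
      simpa [div_eq_mul_inv] using this
    refine ⟨⟨y * (g ^ k)⁻¹, hmem⟩, ?_⟩
    refine (QuotientGroup.eq (s := Subgroup.zpowers g)).mpr ?_
    refine ⟨k, ?_⟩
    group
  have : Finite (G ⧸ Subgroup.zpowers g) := Finite.of_surjective _ hsurj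
  exact Subgroup.finiteIndex_of_finite_quotient
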